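/- Let d ∈ (0,1), let n be a positive even integer and let s > 0, and let φ : ℝ → ℝ. If φ is differentiable at 0 with φ(0) = 0 and φ′(0) = 0, then the generalized adaptive mapping function g is differentiable at 0 with g′(0) = 1; likewise, if φ is differentiable at 1 with φ(1) = 0 and φ′(1) = 0, then g is differentiable at 1 with g′(1) = 1. -/

import Mathlib

lemma stmt12_aux (d : ℝ) (n : ℕ) (hn : 0 < n) (s : ℝ) (φ g : ℝ → ℝ)
    (hg : ∀ x : ℝ, g x = d + (x - d) ^ (n + 1) / ((x - d) ^ n + s * φ x))
    (a : ℝ) (ha : a ≠ d)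
    (hφ : DifferentiableAt ℝ φ a) (hφ0 : φ a = 0) (hφ' : deriv φ a = 0) :
    HasDerivAt g 1 a := by
  have hc : a - d ≠ 0 := sub_ne_zero.mpr ha
  have hnum : HasDerivAt (fun x => (x - d) ^ (n + 1))
      ((n + 1 : ℕ) * (a - d) ^ n * 1) a := by
    have := ((hasDerivAt_id a).sub_const d).pow (n + 1)
    simpa [Pi.pow_def] using this
  have hden : HasDerivAt (fun x => (x - d) ^ n + s * φ x)
      ((n : ℕ) * (a - d) ^ (n - 1) * 1 + s * 0) a := by
    have h1 := ((hasDerivAt_id a).sub_const d).pow n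
    have h2 := (hφ.hasDerivAt).const_mul s
    rw [hφ'] at h2
    simpa [Pi.pow_def, Pi.add_def] using h1.add h2
  have hden0 : (a - d) ^ n + s * φ a ≠ 0 := by
    simp [hφ0, pow_ne_zero _ hc]
  have hdiv := hnum.div hden hden0
  have hpow : (a - d) ^ (n + 1) * (a - d) ^ (n - 1) = (a - d) ^ n * (a - d) ^ n := by
    rw [← pow_add, ← pow_add]
    congr 1
    omega
  have key : (((n + 1 : ℕ) * (a - d) ^ n * 1) * ((a - d) ^ n + s * φ a)
      - (a - d) ^ (n + 1) * ((n : ℕ) * (a - d) ^ (n - 1) * 1 + s * 0))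
      / ((a - d) ^ n + s * φ a) ^ 2 = 1 := by
    rw [hφ0]
    have h2 : ((a - d) ^ n) ^ 2 ≠ 0 := pow_ne_zero _ (pow_ne_zero _ hc)
    field_simp
    push_cast
    nlinarith [hpow]
  rw [key] at hdiv
  have hgfun : g = fun x => d + (x - d) ^ (n + 1) / ((x - d) ^ n + s * φ x) :=
    funext hg
  rw [hgfun]
  simpa using hdiv.const_add d

theorem stmt12 (d : ℝ) (hd : d ∈ Set.Ioo (0 : ℝ) 1) (n : ℕ) (hn : 0 < n) (hne : Even n)
    (s : ℝ) (hs : 0 < s) (φ : ℝ → ℝ)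
    (g : ℝ → ℝ)
    (hg : ∀ x : ℝ, g x = d + (x - d) ^ (n + 1) / ((x - d) ^ n + s * φ x)) :
    (DifferentiableAt ℝ φ 0 → φ 0 = 0 → deriv φ 0 = 0 → HasDerivAt g 1 0) ∧
    (DifferentiableAt ℝ φ 1 → φ 1 = 0 → deriv φ 1 = 0 → HasDerivAt g 1 1) := by
  obtain ⟨hd0, hd1⟩ := hd
  exact ⟨fun h1 h2 h3 => stmt12_aux d n hn s φ g hg 0 (by linarith) h1 h2 h3,
         fun h1 h2 h3 => stmt12_aux d n hn s φ g hg 1 (by linarith) h1 h2 h3⟩
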